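/- Let N ≥ 3 and let ω ∈ C²([1,∞)) be positive with ω satisfying the radial equation ω'' + ((N-1)/r) ω' + f(ω) = 0 on [1,∞) for some continuous f with f(ω(r)) > 0 for all r, and suppose there are constants 0 < c₁ ≤ c₂ with c₁ ≤ r^{N-2} ω(r) ≤ c₂ for all r ≥ 1. Then the limit lim_{r→∞} r^{N-2} ω(r) exists and is a positive real number. -/

import Mathlib

open Filter

private lemma mono_conv (u : ℝ → ℝ) (r₀ C : ℝ) (hm : MonotoneOn u (Set.Ici r₀))
    (hb : ∀ x, r₀ ≤ x → u x ≤ C) : ∃ L, Tendsto u atTop (nhds L) := by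
  set g : ℝ → ℝ := fun x => u (max x r₀) with hg
  have hgm : Monotone g := fun x y hxy =>
    hm (Set.mem_Ici.2 (le_max_right _ _)) (Set.mem_Ici.2 (le_max_right _ _)) (max_le_max hxy le_rfl)
  have hgb : BddAbove (Set.range g) := ⟨C, by rintro _ ⟨x, rfl⟩; exact hb _ (le_max_right _ _)⟩
  refine ⟨⨆ x, g x, (tendsto_atTop_ciSup hgm hgb).congr' ?_⟩
  filter_upwards [eventually_ge_atTop r₀] with x hx
  simp [hg, max_eq_left hx]

private lemma anti_conv (u : ℝ → ℝ) (r₀ C : ℝ) (hm : AntitoneOn u (Set.Ici r₀))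
    (hb : ∀ x, r₀ ≤ x → C ≤ u x) : ∃ L, Tendsto u atTop (nhds L) := by
  set g : ℝ → ℝ := fun x => u (max x r₀) with hg
  have hgm : Antitone g := fun x y hxy =>
    hm (Set.mem_Ici.2 (le_max_right _ _)) (Set.mem_Ici.2 (le_max_right _ _)) (max_le_max hxy le_rfl)
  have hgb : BddBelow (Set.range g) := ⟨C, by rintro _ ⟨x, rfl⟩; exact hb _ (le_max_right _ _)⟩
  refine ⟨⨅ x, g x, (tendsto_atTop_ciInf hgm hgb).congr' ?_⟩
  filter_upwards [eventually_ge_atTop r₀] with x hx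
  simp [hg, max_eq_left hx]

/-- Exact decay of the ground state (Lemma A.1): if `ω > 0` solves the radial equation
`ω'' + ((N-1)/r) ω' + f(ω) = 0` on `[1,∞)` with `f(ω(r)) > 0` and
`c₁ ≤ r^{N-2} ω(r) ≤ c₂`, then `r^{N-2} ω(r)` converges to a positive limit. -/
theorem stmt6 (N : ℕ) (hN : 3 ≤ N) (ω f : ℝ → ℝ)
    (hω : ContDiffOn ℝ 2 ω (Set.Ici 1))
    (hpos : ∀ r : ℝ, 1 ≤ r → 0 < ω r)
    (hf : Continuous f) (hfpos : ∀ r : ℝ, 1 ≤ r → 0 < f (ω r))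
    (hode : ∀ r : ℝ, 1 ≤ r →
      deriv (deriv ω) r + ((N : ℝ) - 1) / r * deriv ω r + f (ω r) = 0)
    (c₁ c₂ : ℝ) (hc₁ : 0 < c₁) (hc₁₂ : c₁ ≤ c₂)
    (hbound : ∀ r : ℝ, 1 ≤ r →
      c₁ ≤ r ^ ((N : ℝ) - 2) * ω r ∧ r ^ ((N : ℝ) - 2) * ω r ≤ c₂) :
    ∃ L : ℝ, 0 < L ∧
      Tendsto (fun r : ℝ => r ^ ((N : ℝ) - 2) * ω r) atTop (nhds L) := by
  set u : ℝ → ℝ := fun r => r ^ ((N : ℝ) - 2) * ω r with hu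
  have hωo : ContDiffOn ℝ 2 ω (Set.Ioi 1) := hω.mono Set.Ioi_subset_Ici_self
  have hdω : ContDiffOn ℝ 1 (deriv ω) (Set.Ioi 1) :=
    hωo.deriv_of_isOpen isOpen_Ioi (by norm_num)
  have hωd : ∀ r ∈ Set.Ioi (1:ℝ), HasDerivAt ω (deriv ω r) r := by
    intro r hr
    exact ((hωo.differentiableOn (by norm_num) r hr).differentiableAt
      (isOpen_Ioi.mem_nhds hr)).hasDerivAt
  have hdωd : ∀ r ∈ Set.Ioi (1:ℝ), HasDerivAt (deriv ω) (deriv (deriv ω) r) r := by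
    intro r hr
    exact ((hdω.differentiableOn one_ne_zero r hr).differentiableAt
      (isOpen_Ioi.mem_nhds hr)).hasDerivAt
  set w : ℝ → ℝ := fun r => ((N : ℝ) - 2) * ω r + r * deriv ω r with hwdef
  have hw : ∀ r ∈ Set.Ioi (1:ℝ), HasDerivAt w (-(r * f (ω r))) r := by
    intro r hr
    have hr1 : (1:ℝ) < r := hr
    have hr0 : r ≠ 0 := by positivity
    have h3 : HasDerivAt (fun s => s * deriv ω s)
        (1 * deriv ω r + r * deriv (deriv ω) r) r := (hasDerivAt_id r).mul (hdωd r hr)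
    have h4 := ((hωd r hr).const_mul ((N : ℝ) - 2)).add h3
    refine h4.congr_deriv ?_
    have hode' := hode r hr1.le
    field_simp at hode'
    linarith
  have hwanti : StrictAntiOn w (Set.Ioi 1) := by
    apply strictAntiOn_of_deriv_neg (convex_Ioi 1)
    · intro r hr; exact (hw r hr).continuousAt.continuousWithinAt
    · intro r hr
      rw [interior_Ioi] at hr
      rw [(hw r hr).deriv]
      have hr0 : (0:ℝ) < r := lt_trans one_pos hr
      have := hfpos r (le_of_lt hr)
      nlinarith
  have hud : ∀ r ∈ Set.Ioi (1:ℝ), HasDerivAt u (r ^ ((N : ℝ) - 3) * w r) r := by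
    intro r hr
    have hr0 : (0:ℝ) < r := lt_trans one_pos hr
    have hrpow : HasDerivAt (fun x : ℝ => x ^ ((N : ℝ) - 2))
        (((N : ℝ) - 2) * r ^ ((N : ℝ) - 3)) r := by
      have := Real.hasDerivAt_rpow_const (p := (N : ℝ) - 2) (x := r) (Or.inl hr0.ne')
      convert this using 2
      ring
    have h5 := hrpow.mul (hωd r hr)
    refine h5.congr_deriv ?_
    have hsplit : r ^ ((N : ℝ) - 2) = r ^ ((N : ℝ) - 3) * r := by
      rw [show (N : ℝ) - 2 = ((N : ℝ) - 3) + 1 by ring, Real.rpow_add_one hr0.ne']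
    rw [hwdef]
    rw [hsplit]
    ring
  have hubd : ∀ x : ℝ, (2:ℝ) ≤ x → c₁ ≤ u x ∧ u x ≤ c₂ := fun x hx =>
    hbound x (by linarith)
  have main : ∀ r₀ : ℝ, 2 ≤ r₀ → (MonotoneOn u (Set.Ici r₀) ∨ AntitoneOn u (Set.Ici r₀)) →
      ∃ L : ℝ, 0 < L ∧ Tendsto u atTop (nhds L) := by
    intro r₀ hr₀ hmono
    have hL : ∃ L, Tendsto u atTop (nhds L) := by
      rcases hmono with h | h
      · exact mono_conv u r₀ c₂ h (fun x hx => (hbound x (by linarith)).2)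
      · exact anti_conv u r₀ c₁ h (fun x hx => (hbound x (by linarith)).1)
    obtain ⟨L, hL⟩ := hL
    refine ⟨L, lt_of_lt_of_le hc₁ ?_, hL⟩
    refine ge_of_tendsto hL ?_
    filter_upwards [eventually_ge_atTop (1:ℝ)] with x hx
    exact (hbound x hx).1
  by_cases hcase : ∀ r ∈ Set.Ioi (1:ℝ), 0 < w r
  · refine main 2 le_rfl (Or.inl ?_)
    apply StrictMonoOn.monotoneOn
    apply strictMonoOn_of_deriv_pos (convex_Ici 2)
    · intro r hr
      have hr1 : r ∈ Set.Ioi (1:ℝ) := by simp only [Set.mem_Ioi]; linarith [hr.out]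
      exact (hud r hr1).continuousAt.continuousWithinAt
    · intro r hr
      rw [interior_Ici] at hr
      have hr1 : r ∈ Set.Ioi (1:ℝ) := by simp only [Set.mem_Ioi]; linarith [hr.out]
      rw [(hud r hr1).deriv]
      have hr0 : (0:ℝ) < r := lt_trans one_pos hr1
      have := hcase r hr1
      positivity
  · push_neg at hcase
    obtain ⟨r₀, hr₀1, hwr₀⟩ := hcase
    refine main (max 2 (r₀ + 1)) (le_max_left _ _) (Or.inr ?_)
    apply StrictAntiOn.antitoneOn
    apply strictAntiOn_of_deriv_neg (convex_Ici _)
    · intro r hr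
      have hr1 : r ∈ Set.Ioi (1:ℝ) := by
        simp only [Set.mem_Ioi]
        have := le_trans (le_max_left 2 (r₀ + 1)) hr.out
        linarith
      exact (hud r hr1).continuousAt.continuousWithinAt
    · intro r hr
      rw [interior_Ici] at hr
      have hrr₀ : r₀ < r := by
        have := lt_of_le_of_lt (le_max_right 2 (r₀ + 1)) hr.out
        linarith
      have hr1 : r ∈ Set.Ioi (1:ℝ) := Set.mem_Ioi.2 (lt_trans hr₀1 hrr₀)
      rw [(hud r hr1).deriv]
      have hr0 : (0:ℝ) < r := lt_trans one_pos hr1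
      have hwneg : w r < 0 := lt_of_lt_of_le (hwanti hr₀1 hr1 hrr₀) hwr₀
      have hp : (0:ℝ) < r ^ ((N : ℝ) - 3) := Real.rpow_pos_of_pos hr0 _
      nlinarith
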